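/- For every odd natural number g \ge 3 the following four identities hold: 2 D_5(g,1) = 5^{(g-1)/2} (f_{g-2} + f_g) + f_{2g+1}; 2 D_5(g,2) = 5^{(g-1)/2} (f_{g-1} + f_{g+1}) + f_{2g}; 2 D_5(g,3) = 5^{(g-1)/2} (f_{g-1} + f_{g+1}) - f_{2g}; 2 D_5(g,4) = 5^{(g-1)/2} (f_{g-2} + f_g) - f_{2g+1}. -/

import Mathlib

/-- `binZ n j` is the binomial coefficient `n choose j` for `j : ℤ`, which is `0`
unless `0 ≤ j ≤ n`. -/
def binZ (n : ℕ) (j : ℤ) : ℤ := if 0 ≤ j then (n.choose j.toNat : ℤ) else 0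

/-- `catC n j = C(n,j) = binom(n,j) - binom(n,j-1)`. -/
def catC (n : ℕ) (j : ℤ) : ℤ := binZ n j - binZ n (j - 1)

/-- `dP p n k = d_p(n,k) = ∑_{s ∈ ℤ} C(n, (n+1-k)/2 + s p)` when `k ≡ n+1 (mod 2)`,
and `0` otherwise. -/
noncomputable def dP (p n k : ℕ) : ℤ :=
  if k % 2 = (n + 1) % 2 then ∑ᶠ s : ℤ, catC n (((n : ℤ) + 1 - k) / 2 + s * p) else 0


/-- `DP p g k = D_p(g,k) = ∑_{n=0}^{g} 2^{g-n} (g choose n) d_p(n,k)`. -/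
noncomputable def DP (p g k : ℕ) : ℤ :=
  ∑ n ∈ Finset.range (g + 1), 2 ^ (g - n) * (g.choose n : ℤ) * dP p n k

lemma binZ_of_lt {n : ℕ} {j : ℤ} (h : j < 0) : binZ n j = 0 := by simp [binZ, not_le.2 h]

lemma binZ_of_gt {n : ℕ} {j : ℤ} (h : (n:ℤ) < j) : binZ n j = 0 := by
  unfold binZ
  rcases le_or_gt 0 j with hj | hj
  · simp only [hj, if_true]
    have : n < j.toNat := by omega
    simp [Nat.choose_eq_zero_of_lt this]
  · simp [not_le.2 hj]

lemma binZ_succ (n : ℕ) (j : ℤ) : binZ (n+1) j = binZ n j + binZ n (j-1) := by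
  rcases lt_trichotomy j 0 with h | h | h
  · rw [binZ_of_lt h, binZ_of_lt h, binZ_of_lt (by omega)]; ring
  · subst h; simp [binZ, binZ_of_lt (show (-1:ℤ) < 0 by norm_num)]
  · obtain ⟨m, rfl⟩ : ∃ m : ℕ, j = (m:ℤ)+1 := ⟨(j-1).toNat, by omega⟩
    unfold binZ
    have h1 : (0:ℤ) ≤ (m:ℤ)+1 := by omega
    have h2 : (0:ℤ) ≤ (m:ℤ)+1-1 := by omega
    simp only [h1, h2, if_true]
    have e1 : ((m:ℤ)+1).toNat = m+1 := by omega
    have e2 : ((m:ℤ)+1-1).toNat = m := by omega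
    rw [e1, e2, Nat.choose_succ_succ]
    push_cast; ring

lemma catC_succ (n : ℕ) (j : ℤ) : catC (n+1) j = catC n j + catC n (j-1) := by
  unfold catC; rw [binZ_succ, binZ_succ]; ring

lemma catC_eq_zero {n : ℕ} {j : ℤ} (h : j < 0 ∨ (n:ℤ)+1 < j) : catC n j = 0 := by
  unfold catC
  rcases h with h | h
  · rw [binZ_of_lt h, binZ_of_lt (by omega)]; ring
  · rw [binZ_of_gt (by omega), binZ_of_gt (by omega)]; ring

lemma binZ_symm (n : ℕ) (j : ℤ) : binZ n ((n:ℤ) - j) = binZ n j := by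
  rcases lt_trichotomy j 0 with h | h | h
  · rw [binZ_of_lt h, binZ_of_gt (by omega)]
  · subst h; simp [binZ, Nat.choose_self]
  · rcases le_or_gt j n with h2 | h2
    · unfold binZ
      have h1 : (0:ℤ) ≤ (n:ℤ) - j := by omega
      simp only [h1, le_of_lt h, if_true]
      congr 1
      have e1 : ((n:ℤ)-j).toNat = n - j.toNat := by omega
      rw [e1]
      exact_mod_cast congrArg Nat.cast (Nat.choose_symm (by omega : j.toNat ≤ n))
    · rw [binZ_of_lt (by omega), binZ_of_gt h2]

lemma catC_symm (n : ℕ) (j : ℤ) : catC n ((n:ℤ) + 1 - j) = - catC n j := by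
  have e1 : binZ n ((n:ℤ) + 1 - j) = binZ n (j - 1) := by
    rw [show (n:ℤ)+1-j = (n:ℤ) - (j-1) by ring, binZ_symm]
  have e2 : binZ n ((n:ℤ) + 1 - j - 1) = binZ n j := by
    rw [show (n:ℤ)+1-j-1 = (n:ℤ) - j by ring, binZ_symm]
  unfold catC
  rw [e1, e2]; ring

lemma dP_eq_sum (n k : ℕ) (a b : ℤ) (hk : k ≤ 5) (hpar : k % 2 = (n+1) % 2)
    (ha : a ≤ -(n:ℤ)-1) (hb : (n:ℤ)+1 ≤ b) :
    dP 5 n k = ∑ s ∈ Finset.Icc a b, catC n (((n:ℤ)+1-k)/2 + s*5) := by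
  rw [dP, if_pos hpar]
  apply finsum_eq_finset_sum_of_support_subset
  intro s hs
  simp only [Function.mem_support, ne_eq] at hs
  by_contra hmem
  simp only [Finset.coe_Icc, Set.mem_Icc, not_and_or, not_le] at hmem
  push_cast at hs
  exact hs (catC_eq_zero (by omega))

lemma dP_k0 (n : ℕ) : dP 5 n 0 = 0 := by
  rcases Nat.decEq (n % 2) 0 with hne | he
  · have hpar : 0 % 2 = (n+1) % 2 := by omega
    rw [dP_eq_sum n 0 (-(n:ℤ)-1) ((n:ℤ)+1) (by norm_num) hpar le_rfl le_rfl]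
    have h2 : (2:ℤ) * (((n:ℤ)+1-(0:ℕ))/2) = (n:ℤ)+1 := by push_cast; omega
    set j0 : ℤ := ((n:ℤ)+1-(0:ℕ))/2 with hj0
    have key : ∑ s ∈ Finset.Icc (-(n:ℤ)-1) ((n:ℤ)+1), catC n (j0 + s*5)
        = ∑ s ∈ Finset.Icc (-(n:ℤ)-1) ((n:ℤ)+1), -(catC n (j0 + s*5)) := by
      apply Finset.sum_nbij' (fun s => -s) (fun s => -s)
      · intro s hsm; simp only [Finset.mem_Icc] at *; omega
      · intro s hsm; simp only [Finset.mem_Icc] at *; omega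
      · intro s _; ring
      · intro s _; ring
      · intro s _
        rw [show j0 + s*5 = (n:ℤ)+1 - (j0 + (-s)*5) by omega, catC_symm]
    have := key
    rw [Finset.sum_neg_distrib] at this
    linarith
  · rw [dP, if_neg]; omega

lemma dP_k5 (n : ℕ) : dP 5 n 5 = 0 := by
  rcases Nat.decEq (n % 2) 1 with hne | ho
  · have hpar : 5 % 2 = (n+1) % 2 := by omega
    rw [dP_eq_sum n 5 (-(n:ℤ)-1) ((n:ℤ)+2) (by norm_num) hpar le_rfl (by omega)]
    have h2 : (2:ℤ) * (((n:ℤ)+1-(5:ℕ))/2) = (n:ℤ)-4 := by push_cast; omega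
    set j0 : ℤ := ((n:ℤ)+1-(5:ℕ))/2 with hj0
    have key : ∑ s ∈ Finset.Icc (-(n:ℤ)-1) ((n:ℤ)+2), catC n (j0 + s*5)
        = ∑ s ∈ Finset.Icc (-(n:ℤ)-1) ((n:ℤ)+2), -(catC n (j0 + s*5)) := by
      apply Finset.sum_nbij' (fun s => 1-s) (fun s => 1-s)
      · intro s hsm; simp only [Finset.mem_Icc] at *; omega
      · intro s hsm; simp only [Finset.mem_Icc] at *; omega
      · intro s _; ring
      · intro s _; ring
      · intro s _
        rw [show j0 + s*5 = (n:ℤ)+1 - (j0 + (1-s)*5) by omega, catC_symm]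
    have := key
    rw [Finset.sum_neg_distrib] at this
    linarith
  · rw [dP, if_neg]; omega

lemma dP_succ (n k : ℕ) (hk : k ≤ 3) :
    dP 5 (n+1) (k+1) = dP 5 n k + dP 5 n (k+2) := by
  rcases Nat.decEq (k % 2) ((n+1) % 2) with heq | heq
  · rw [dP, if_neg (by omega), dP, if_neg (by omega), dP, if_neg (by omega)]; ring
  · have hp1 : (k+1) % 2 = ((n+1)+1) % 2 := by omega
    have hp0 : k % 2 = (n+1) % 2 := by omega
    have hp2 : (k+2) % 2 = (n+1) % 2 := by omega
    rw [dP_eq_sum (n+1) (k+1) (-(n:ℤ)-2) ((n:ℤ)+2) (by omega) hp1 (by push_cast; omega) (by push_cast; omega),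
        dP_eq_sum n k (-(n:ℤ)-2) ((n:ℤ)+2) (by omega) hp0 (by omega) (by omega),
        dP_eq_sum n (k+2) (-(n:ℤ)-2) ((n:ℤ)+2) (by omega) hp2 (by omega) (by omega)]
    rw [← Finset.sum_add_distrib]
    apply Finset.sum_congr rfl
    intro s _
    have e1 : (((n:ℤ)+1)+1-((k:ℤ)+1))/2 + s*5 = ((n:ℤ)+1-(k:ℤ))/2 + s*5 := by omega
    push_cast [e1]
    rw [catC_succ]
    congr 1
    congr 1
    omega

lemma DP_k0 (g : ℕ) : DP 5 g 0 = 0 :=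
  Finset.sum_eq_zero (fun n _ => by rw [dP_k0]; ring)

lemma DP_k5 (g : ℕ) : DP 5 g 5 = 0 :=
  Finset.sum_eq_zero (fun n _ => by rw [dP_k5]; ring)

lemma DP_succ (g k : ℕ) (hk : k ≤ 3) :
    DP 5 (g+1) (k+1) = DP 5 g k + 2 * DP 5 g (k+1) + DP 5 g (k+2) := by
  have hsplit : ∀ i ∈ Finset.range (g+1),
      2 ^ (g+1-(i+1)) * ((g+1).choose (i+1) : ℤ) * dP 5 (i+1) (k+1)
      = 2 ^ (g-i) * (g.choose i : ℤ) * dP 5 i k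
        + 2 ^ (g-i) * (g.choose i : ℤ) * dP 5 i (k+2)
        + 2 ^ (g-i) * (g.choose (i+1) : ℤ) * dP 5 (i+1) (k+1) := by
    intro i hi
    simp only [Finset.mem_range] at hi
    rw [show g+1-(i+1) = g-i by omega, Nat.choose_succ_succ, dP_succ i k hk]
    push_cast; ring
  have h2 : 2 * DP 5 g (k+1)
      = (∑ i ∈ Finset.range g, 2 ^ (g-i) * (g.choose (i+1) : ℤ) * dP 5 (i+1) (k+1))
        + 2 ^ (g+1) * ((g+1).choose 0 : ℤ) * dP 5 0 (k+1) := by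
    rw [DP, Finset.mul_sum, Finset.sum_range_succ']
    congr 1
    · apply Finset.sum_congr rfl
      intro i hi
      simp only [Finset.mem_range] at hi
      rw [show g - i = (g-(i+1))+1 by omega, pow_succ]
      ring
    · simp [pow_succ]; ring
  calc DP 5 (g+1) (k+1)
      = (∑ i ∈ Finset.range (g+1),
          2 ^ (g+1-(i+1)) * ((g+1).choose (i+1) : ℤ) * dP 5 (i+1) (k+1))
        + 2 ^ (g+1-0) * ((g+1).choose 0 : ℤ) * dP 5 0 (k+1) := by
        rw [DP, Finset.sum_range_succ']
    _ = (∑ i ∈ Finset.range (g+1),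
          (2 ^ (g-i) * (g.choose i : ℤ) * dP 5 i k
           + 2 ^ (g-i) * (g.choose i : ℤ) * dP 5 i (k+2)
           + 2 ^ (g-i) * (g.choose (i+1) : ℤ) * dP 5 (i+1) (k+1)))
        + 2 ^ (g+1) * ((g+1).choose 0 : ℤ) * dP 5 0 (k+1) := by
        rw [Finset.sum_congr rfl hsplit]; norm_num
    _ = DP 5 g k + DP 5 g (k+2)
        + ((∑ i ∈ Finset.range (g+1), 2 ^ (g-i) * (g.choose (i+1) : ℤ) * dP 5 (i+1) (k+1))
           + 2 ^ (g+1) * ((g+1).choose 0 : ℤ) * dP 5 0 (k+1)) := by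
        simp only [Finset.sum_add_distrib, DP]; ring
    _ = DP 5 g k + DP 5 g (k+2)
        + ((∑ i ∈ Finset.range g, 2 ^ (g-i) * (g.choose (i+1) : ℤ) * dP 5 (i+1) (k+1))
           + 2 ^ (g+1) * ((g+1).choose 0 : ℤ) * dP 5 0 (k+1)) := by
        rw [Finset.sum_range_succ, Nat.choose_eq_zero_of_lt (by omega : g < g+1)]
        push_cast; ring
    _ = DP 5 g k + 2 * DP 5 g (k+1) + DP 5 g (k+2) := by rw [h2]; ring

lemma DP_key : ∀ u : ℕ,
    2 * DP 5 (2*u+3) 1 = 5^(u+1) * ((Nat.fib (2*u+1):ℤ) + Nat.fib (2*u+3)) + Nat.fib (4*u+7) ∧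
    2 * DP 5 (2*u+3) 2 = 5^(u+1) * ((Nat.fib (2*u+2):ℤ) + Nat.fib (2*u+4)) + Nat.fib (4*u+6) ∧
    2 * DP 5 (2*u+3) 3 = 5^(u+1) * ((Nat.fib (2*u+2):ℤ) + Nat.fib (2*u+4)) - Nat.fib (4*u+6) ∧
    2 * DP 5 (2*u+3) 4 = 5^(u+1) * ((Nat.fib (2*u+1):ℤ) + Nat.fib (2*u+3)) - Nat.fib (4*u+7) := by
  intro u
  induction u with
  | zero =>
    have d01 : dP 5 0 1 = 1 := by
      rw [dP_eq_sum 0 1 (-1) 1 (by norm_num) (by norm_num) (by norm_num) (by norm_num)]; decide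
    have d03 : dP 5 0 3 = 0 := by
      rw [dP_eq_sum 0 3 (-1) 1 (by norm_num) (by norm_num) (by norm_num) (by norm_num)]; decide
    have d12 : dP 5 1 2 = 1 := by
      rw [dP_eq_sum 1 2 (-2) 2 (by norm_num) (by norm_num) (by norm_num) (by norm_num)]; decide
    have d14 : dP 5 1 4 = 0 := by
      rw [dP_eq_sum 1 4 (-2) 2 (by norm_num) (by norm_num) (by norm_num) (by norm_num)]; decide
    have d21 : dP 5 2 1 = 1 := by
      rw [dP_eq_sum 2 1 (-3) 3 (by norm_num) (by norm_num) (by norm_num) (by norm_num)]; decide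
    have d23 : dP 5 2 3 = 1 := by
      rw [dP_eq_sum 2 3 (-3) 3 (by norm_num) (by norm_num) (by norm_num) (by norm_num)]; decide
    have d32 : dP 5 3 2 = 2 := by
      rw [dP_eq_sum 3 2 (-4) 4 (by norm_num) (by norm_num) (by norm_num) (by norm_num)]; decide
    have d34 : dP 5 3 4 = 1 := by
      rw [dP_eq_sum 3 4 (-4) 4 (by norm_num) (by norm_num) (by norm_num) (by norm_num)]; decide
    have d02 : dP 5 0 2 = 0 := by rw [dP, if_neg]; decide
    have d04 : dP 5 0 4 = 0 := by rw [dP, if_neg]; decide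
    have d11 : dP 5 1 1 = 0 := by rw [dP, if_neg]; decide
    have d13 : dP 5 1 3 = 0 := by rw [dP, if_neg]; decide
    have d22 : dP 5 2 2 = 0 := by rw [dP, if_neg]; decide
    have d24 : dP 5 2 4 = 0 := by rw [dP, if_neg]; decide
    have d31 : dP 5 3 1 = 0 := by rw [dP, if_neg]; decide
    have d33 : dP 5 3 3 = 0 := by rw [dP, if_neg]; decide
    have h1 : DP 5 3 1 = 14 := by
      simp [DP, Finset.sum_range_succ, d01, d11, d21, d31]
    have h2 : DP 5 3 2 = 14 := by
      simp [DP, Finset.sum_range_succ, d02, d12, d22, d32]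
    have h3 : DP 5 3 3 = 6 := by
      simp [DP, Finset.sum_range_succ, d03, d13, d23, d33]
    have h4 : DP 5 3 4 = 1 := by
      simp [DP, Finset.sum_range_succ, d04, d14, d24, d34]
    refine ⟨?_, ?_, ?_, ?_⟩
    · rw [show 2*0+3 = 3 by norm_num, h1]; decide
    · rw [show 2*0+3 = 3 by norm_num, h2]; decide
    · rw [show 2*0+3 = 3 by norm_num, h3]; decide
    · rw [show 2*0+3 = 3 by norm_num, h4]; decide
  | succ u ih =>
    obtain ⟨ha, hb, hc, hd⟩ := ih
    have hA1 : DP 5 (2*u+4) 1 = DP 5 (2*u+3) 0 + 2 * DP 5 (2*u+3) 1 + DP 5 (2*u+3) 2 :=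
      DP_succ (2*u+3) 0 (by omega)
    have hA2 : DP 5 (2*u+4) 2 = DP 5 (2*u+3) 1 + 2 * DP 5 (2*u+3) 2 + DP 5 (2*u+3) 3 :=
      DP_succ (2*u+3) 1 (by omega)
    have hA3 : DP 5 (2*u+4) 3 = DP 5 (2*u+3) 2 + 2 * DP 5 (2*u+3) 3 + DP 5 (2*u+3) 4 :=
      DP_succ (2*u+3) 2 (by omega)
    have hA4 : DP 5 (2*u+4) 4 = DP 5 (2*u+3) 3 + 2 * DP 5 (2*u+3) 4 + DP 5 (2*u+3) 5 :=
      DP_succ (2*u+3) 3 (by omega)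
    have hB1 : DP 5 (2*u+5) 1 = DP 5 (2*u+4) 0 + 2 * DP 5 (2*u+4) 1 + DP 5 (2*u+4) 2 :=
      DP_succ (2*u+4) 0 (by omega)
    have hB2 : DP 5 (2*u+5) 2 = DP 5 (2*u+4) 1 + 2 * DP 5 (2*u+4) 2 + DP 5 (2*u+4) 3 :=
      DP_succ (2*u+4) 1 (by omega)
    have hB3 : DP 5 (2*u+5) 3 = DP 5 (2*u+4) 2 + 2 * DP 5 (2*u+4) 3 + DP 5 (2*u+4) 4 :=
      DP_succ (2*u+4) 2 (by omega)
    have hB4 : DP 5 (2*u+5) 4 = DP 5 (2*u+4) 3 + 2 * DP 5 (2*u+4) 4 + DP 5 (2*u+4) 5 :=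
      DP_succ (2*u+4) 3 (by omega)
    rw [DP_k0] at hA1 hB1
    rw [DP_k5] at hA4 hB4
    have F : ∀ m:ℕ, (Nat.fib (m+2):ℤ) = Nat.fib (m+1) + Nat.fib m := by
      intro m; push_cast [Nat.fib_add_two]; ring
    have f3 : (Nat.fib (2*u+3):ℤ) = Nat.fib (2*u+2) + Nat.fib (2*u+1) := F (2*u+1)
    have f4 : (Nat.fib (2*u+4):ℤ) = Nat.fib (2*u+3) + Nat.fib (2*u+2) := F (2*u+2)
    have f5 : (Nat.fib (2*u+5):ℤ) = Nat.fib (2*u+4) + Nat.fib (2*u+3) := F (2*u+3)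
    have f6 : (Nat.fib (2*u+6):ℤ) = Nat.fib (2*u+5) + Nat.fib (2*u+4) := F (2*u+4)
    have g8 : (Nat.fib (4*u+8):ℤ) = Nat.fib (4*u+7) + Nat.fib (4*u+6) := F (4*u+6)
    have g9 : (Nat.fib (4*u+9):ℤ) = Nat.fib (4*u+8) + Nat.fib (4*u+7) := F (4*u+7)
    have g10 : (Nat.fib (4*u+10):ℤ) = Nat.fib (4*u+9) + Nat.fib (4*u+8) := F (4*u+8)
    have g11 : (Nat.fib (4*u+11):ℤ) = Nat.fib (4*u+10) + Nat.fib (4*u+9) := F (4*u+9)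
    have e1 : 2*(u+1)+3 = 2*u+5 := by ring
    have e2 : 2*(u+1)+1 = 2*u+3 := by ring
    have e3 : 2*(u+1)+2 = 2*u+4 := by ring
    have e4 : 2*(u+1)+4 = 2*u+6 := by ring
    have e5 : 4*(u+1)+7 = 4*u+11 := by ring
    have e6 : 4*(u+1)+6 = 4*u+10 := by ring
    have e7 : (5:ℤ)^(u+1+1) = 5 * 5^(u+1) := by ring
    simp only [f4, f3] at ha hb hc hd
    refine ⟨?_, ?_, ?_, ?_⟩
    · rw [e1, e2, e5, e7, g11, g10, g9, g8, f5, f4, f3]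
      linear_combination 2*hB1 + 4*hA1 + 2*hA2 + 5*ha + 4*hb + hc
    · rw [e1, e3, e4, e6, e7, g10, g9, g8, f6, f5, f4, f3]
      linear_combination 2*hB2 + 2*hA1 + 4*hA2 + 2*hA3 + 4*ha + 6*hb + 4*hc + hd
    · rw [e1, e3, e4, e6, e7, g10, g9, g8, f6, f5, f4, f3]
      linear_combination 2*hB3 + 2*hA2 + 4*hA3 + 2*hA4 + ha + 4*hb + 6*hc + 4*hd
    · rw [e1, e2, e5, e7, g11, g10, g9, g8, f5, f4, f3]
      linear_combination 2*hB4 + 2*hA3 + 4*hA4 + hb + 4*hc + 5*hd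

/-- For every odd `g ≥ 3`:
`2 D_5(g,1) = 5^{(g-1)/2} (f_{g-2} + f_g) + f_{2g+1}`,
`2 D_5(g,2) = 5^{(g-1)/2} (f_{g-1} + f_{g+1}) + f_{2g}`,
`2 D_5(g,3) = 5^{(g-1)/2} (f_{g-1} + f_{g+1}) - f_{2g}`,
`2 D_5(g,4) = 5^{(g-1)/2} (f_{g-2} + f_g) - f_{2g+1}`. -/
theorem DP_five_odd (g : ℕ) (hg : 3 ≤ g) (hgo : Odd g) :
    2 * DP 5 g 1 =
      5 ^ ((g - 1) / 2) * ((Nat.fib (g - 2) : ℤ) + (Nat.fib g : ℤ)) + (Nat.fib (2 * g + 1) : ℤ) ∧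
    2 * DP 5 g 2 =
      5 ^ ((g - 1) / 2) * ((Nat.fib (g - 1) : ℤ) + (Nat.fib (g + 1) : ℤ)) + (Nat.fib (2 * g) : ℤ) ∧
    2 * DP 5 g 3 =
      5 ^ ((g - 1) / 2) * ((Nat.fib (g - 1) : ℤ) + (Nat.fib (g + 1) : ℤ)) - (Nat.fib (2 * g) : ℤ) ∧
    2 * DP 5 g 4 =
      5 ^ ((g - 1) / 2) * ((Nat.fib (g - 2) : ℤ) + (Nat.fib g : ℤ)) - (Nat.fib (2 * g + 1) : ℤ) := by
  obtain ⟨u, rfl⟩ : ∃ u, g = 2*u+3 := by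
    obtain ⟨t, ht⟩ := hgo; exact ⟨t-1, by omega⟩
  obtain ⟨k1, k2, k3, k4⟩ := DP_key u
  have e1 : (2*u+3-1)/2 = u+1 := by omega
  have e2 : 2*u+3-2 = 2*u+1 := by omega
  have e3 : 2*u+3-1 = 2*u+2 := by omega
  have e4 : 2*u+3+1 = 2*u+4 := by ring
  have e5 : 2*(2*u+3)+1 = 4*u+7 := by ring
  have e6 : 2*(2*u+3) = 4*u+6 := by ring
  rw [e1, e2, e3, e4, e5, e6]
  exact ⟨k1, k2, k3, k4⟩
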